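/- Let A be a symmetric Pickands dependence function (A(t) = A(1-t) for all t) with A(t) > 1-t on (0,1/2], and let W be defined via x(t) = t + A(t) - 1, W(x(t)) = A(t) - t. Then W is invertible on [0,1] and is an involution: W(W(x)) = x for all x ∈ [0,1]. -/

import Mathlib

def IsPickands (A : ℝ → ℝ) : Prop :=
  (∀ t ∈ Set.Icc (0:ℝ) 1, max t (1 - t) ≤ A t ∧ A t ≤ 1) ∧
  ConvexOn ℝ (Set.Icc (0:ℝ) 1) A

/-- for a symmetric Pickands function A with A(t) > 1 - t on (0,1/2],
the transform W (defined by W(t + A t - 1) = A t - t) is an involution of [0,1]. -/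
theorem stmt8 (A W : ℝ → ℝ) (hA : IsPickands A)
    (hsym : ∀ t ∈ Set.Icc (0:ℝ) 1, A t = A (1 - t))
    (hgt : ∀ t ∈ Set.Ioc (0:ℝ) (1/2), 1 - t < A t)
    (hrel : ∀ t ∈ Set.Icc (0:ℝ) 1, W (t + A t - 1) = A t - t) :
    Set.BijOn W (Set.Icc (0:ℝ) 1) (Set.Icc (0:ℝ) 1) ∧
    ∀ x ∈ Set.Icc (0:ℝ) 1, W (W x) = x := by
  obtain ⟨hbnd, hconv⟩ := hA
  have hA0 : A 0 = 1 := by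
    have h := hbnd 0 (by norm_num)
    have h1 : (1:ℝ) ≤ A 0 := le_trans (by norm_num) h.1
    linarith [h.2]
  have hA1 : A 1 = 1 := by
    have h := hbnd 1 (by norm_num)
    have h1 : (1:ℝ) ≤ A 1 := le_trans (by norm_num) h.1
    linarith [h.2]
  set f : ℝ → ℝ := fun t => t + A t - 1 with hfdef
  have hf0 : f 0 = 0 := by simp [hfdef, hA0]
  have hf1 : f 1 = 1 := by simp [hfdef, hA1]
  have fpos : ∀ t ∈ Set.Ioc (0:ℝ) 1, 0 < f t := by
    intro t ht
    rcases le_or_gt t (1/2) with h | h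
    · have := hgt t ⟨ht.1, h⟩
      simp only [hfdef]; linarith
    · have h1 := (hbnd t ⟨le_of_lt ht.1, ht.2⟩).1
      have h2 : t ≤ A t := le_trans (le_max_left _ _) h1
      simp only [hfdef]; linarith
  -- strict monotonicity of f on [0,1]
  have hmono : StrictMonoOn f (Set.Icc 0 1) := by
    intro s hs t ht hst
    rcases eq_or_lt_of_le hs.1 with h0 | h0
    · rw [← h0, hf0]
      exact fpos t ⟨h0 ▸ hst, ht.2⟩
    · have ht0 : 0 < t := lt_trans h0 hst
      have hftpos : 0 < f t := fpos t ⟨ht0, ht.2⟩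
      have htne : t ≠ 0 := ne_of_gt ht0
      have hc1 : s / t < 1 := (div_lt_one ht0).mpr hst
      have hc0 : 0 ≤ s / t := div_nonneg hs.1 ht0.le
      have hcomb := hconv.2 (show (0:ℝ) ∈ Set.Icc (0:ℝ) 1 by norm_num) ht
        (show (0:ℝ) ≤ 1 - s / t by linarith) hc0 (by ring)
      have hrw : (1 - s / t) • (0:ℝ) + (s / t) • t = s := by
        field_simp
        simp only [smul_eq_mul, mul_zero, zero_add]
        exact div_mul_cancel₀ s htne
      rw [hrw, smul_eq_mul, smul_eq_mul, hA0] at hcomb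
      have hfs : f s ≤ (s / t) * f t := by
        simp only [hfdef]
        have hst' : s / t * t = s := div_mul_cancel₀ s htne
        nlinarith [hcomb]
      calc f s ≤ (s / t) * f t := hfs
        _ < f t := by
          have := mul_lt_mul_of_pos_right hc1 hftpos
          linarith
  -- continuity of A on [0,1]
  have hcontA : ContinuousOn A (Set.Icc 0 1) := by
    intro x hx
    rcases eq_or_lt_of_le hx.1 with h0 | h0
    · -- x = 0
      subst h0
      unfold ContinuousWithinAt
      rw [hA0]
      apply tendsto_of_tendsto_of_tendsto_of_le_of_le'
        (g := fun t : ℝ => 1 - t) (h := fun _ : ℝ => (1:ℝ))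
      · have h : Filter.Tendsto (fun t : ℝ => 1 - t) (nhds 0) (nhds 1) := by
          have hc : Continuous (fun t : ℝ => 1 - t) := continuous_const.sub continuous_id
          have := hc.tendsto (0:ℝ)
          simpa using this
        exact h.mono_left nhdsWithin_le_nhds
      · exact tendsto_const_nhds
      · filter_upwards [self_mem_nhdsWithin] with t ht
        exact le_trans (le_max_right _ _) (hbnd t ht).1
      · filter_upwards [self_mem_nhdsWithin] with t ht
        exact (hbnd t ht).2
    · rcases eq_or_lt_of_le hx.2 with h1 | h1
      · -- x = 1
        subst h1
        unfold ContinuousWithinAt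
        rw [hA1]
        apply tendsto_of_tendsto_of_tendsto_of_le_of_le'
          (g := fun t : ℝ => t) (h := fun _ : ℝ => (1:ℝ))
        · exact (continuous_id.tendsto (1:ℝ)).mono_left nhdsWithin_le_nhds
        · exact tendsto_const_nhds
        · filter_upwards [self_mem_nhdsWithin] with t ht
          exact le_trans (le_max_left _ _) (hbnd t ht).1
        · filter_upwards [self_mem_nhdsWithin] with t ht
          exact (hbnd t ht).2
      · -- interior point
        have hint : ContinuousOn A (Set.Ioo (0:ℝ) 1) := by
          have := hconv.continuousOn_interior
          rwa [interior_Icc] at this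
        have : ContinuousAt A x :=
          hint.continuousAt (isOpen_Ioo.mem_nhds ⟨h0, h1⟩)
        exact this.continuousWithinAt
  have hcontf : ContinuousOn f (Set.Icc 0 1) := by
    simp only [hfdef]
    exact (continuousOn_id.add hcontA).sub continuousOn_const
  -- f maps [0,1] onto [0,1]
  have hmaps : Set.MapsTo f (Set.Icc 0 1) (Set.Icc 0 1) := by
    intro t ht
    have hmono' := hmono.monotoneOn
    constructor
    · have := hmono' (by norm_num : (0:ℝ) ∈ Set.Icc (0:ℝ) 1) ht ht.1
      rwa [hf0] at this
    · have := hmono' ht (by norm_num : (1:ℝ) ∈ Set.Icc (0:ℝ) 1) ht.2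
      rwa [hf1] at this
  have hsurj : Set.SurjOn f (Set.Icc 0 1) (Set.Icc 0 1) := by
    have := intermediate_value_Icc (by norm_num : (0:ℝ) ≤ 1) hcontf
    rw [hf0, hf1] at this
    exact this
  -- key relation: W (f t) = f (1 - t)
  have key : ∀ t ∈ Set.Icc (0:ℝ) 1, W (f t) = f (1 - t) := by
    intro t ht
    have h1 : (1 - t) ∈ Set.Icc (0:ℝ) 1 := ⟨by linarith [ht.2], by linarith [ht.1]⟩
    have h2 := hrel t ht
    have h3 := hsym t ht
    simp only [hfdef]
    rw [h2, ← h3]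
    ring
  have hmem1t : ∀ t ∈ Set.Icc (0:ℝ) 1, (1 - t) ∈ Set.Icc (0:ℝ) 1 := by
    intro t ht
    exact ⟨by linarith [ht.2], by linarith [ht.1]⟩
  -- involution
  have hinv : ∀ x ∈ Set.Icc (0:ℝ) 1, W (W x) = x := by
    intro x hx
    obtain ⟨t, ht, hft⟩ := hsurj hx
    rw [← hft, key t ht, key (1 - t) (hmem1t t ht)]
    norm_num
  have hWmaps : Set.MapsTo W (Set.Icc 0 1) (Set.Icc 0 1) := by
    intro x hx
    obtain ⟨t, ht, hft⟩ := hsurj hx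
    rw [← hft, key t ht]
    exact hmaps (hmem1t t ht)
  refine ⟨Set.InvOn.bijOn ⟨hinv, hinv⟩ hWmaps hWmaps, hinv⟩
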